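/- Let a ≥ 0 and δ ≥ 1 be integers with s + δ < T. Then for every integer t with s + δ + 1 ≤ t ≤ T + 1, the difference P(L > a)·f_{(s,a)}(t) − P(L > a + δ)·f_{(s+δ,a+δ)}(t) equals Σ_{u=1}^{δ} (g + (T − s − u) c)·P(L = a + u); in particular this difference does not depend on t. Here L has the discrete Weibull distribution W(θ,β). -/

import Mathlib

open MeasureTheory ProbabilityTheory Real

private lemma integral_step {Ω : Type*} [MeasureSpace Ω] [IsProbabilityMeasure (ℙ : Measure Ω)]
    (X : Ω → ℕ) (hX : Measurable X) (hpos : ∀ ω, 1 ≤ X ω) (M : ℕ) (φ : ℕ → ℝ) (C : ℝ) :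
    ∫ ω, (if X ω ≤ M then φ (X ω) else C) ∂ℙ
      = ∑ k ∈ Finset.Icc 1 M, φ k * (ℙ {ω | X ω = k}).toReal
        + C * (ℙ {ω | M < X ω}).toReal := by
  have hmeas : ∀ k : ℕ, MeasurableSet {ω | X ω = k} := fun k => hX (measurableSet_singleton k)
  have hmeas' : MeasurableSet {ω | M < X ω} := hX measurableSet_Ioi
  have hfun : (fun ω => if X ω ≤ M then φ (X ω) else C)
      = fun ω => (∑ k ∈ Finset.Icc 1 M, Set.indicator {ω | X ω = k} (fun _ => φ k) ω)
        + Set.indicator {ω | M < X ω} (fun _ => C) ω := by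
    funext ω
    by_cases hω : X ω ≤ M
    · rw [if_pos hω, Set.indicator_of_notMem (by simpa using hω), add_zero,
        Finset.sum_eq_single_of_mem (X ω) (Finset.mem_Icc.2 ⟨hpos ω, hω⟩)]
      · simp [Set.indicator_apply]
      · intro b hb hne
        exact Set.indicator_of_notMem (fun hmem => hne hmem.symm) _
    · rw [if_neg hω, Set.indicator_of_mem (by simpa using not_le.mp hω),
        Finset.sum_eq_zero, zero_add]
      intro b hb
      apply Set.indicator_of_notMem
      intro hmem
      exact hω (le_trans (le_of_eq hmem) (Finset.mem_Icc.1 hb).2)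
  have hint1 : ∀ k ∈ Finset.Icc 1 M,
      Integrable (Set.indicator {ω | X ω = k} (fun _ => φ k)) ℙ :=
    fun k _ => (integrable_const (φ k)).indicator (hmeas k)
  have hint2 : Integrable (Set.indicator {ω | M < X ω} (fun _ => C)) ℙ :=
    (integrable_const C).indicator hmeas'
  rw [hfun, integral_add (integrable_finset_sum _ hint1) hint2, integral_finset_sum _ hint1]
  congr 1
  · exact Finset.sum_congr rfl fun k _ => by
      rw [integral_indicator_const _ (hmeas k), smul_eq_mul, mul_comm]; rfl
  · rw [integral_indicator_const _ hmeas', smul_eq_mul, mul_comm]; rfl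

private lemma pmf_eq {Ω : Type*} [MeasureSpace Ω] [IsProbabilityMeasure (ℙ : Measure Ω)]
    (X : Ω → ℕ) (hX : Measurable X) (n : ℕ) :
    (ℙ {ω | X ω = n + 1}).toReal
      = (ℙ {ω | n < X ω}).toReal - (ℙ {ω | n + 1 < X ω}).toReal := by
  have hset : {ω | n < X ω} = {ω | X ω = n + 1} ∪ {ω | n + 1 < X ω} := by
    ext ω; simp only [Set.mem_setOf_eq, Set.mem_union]; omega
  have hdisj : Disjoint {ω | X ω = n + 1} {ω | n + 1 < X ω} := by
    rw [Set.disjoint_left]; intro ω h1 h2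
    simp only [Set.mem_setOf_eq] at h1 h2; omega
  rw [hset, measure_union hdisj (hX measurableSet_Ioi),
    ENNReal.toReal_add (measure_ne_top _ _) (measure_ne_top _ _)]
  ring

private lemma key_lemma {Ω : Type*} [MeasureSpace Ω] [IsProbabilityMeasure (ℙ : Measure Ω)]
    (θ β : ℝ) (L X : Ω → ℕ) (hL : Measurable L) (hX : Measurable X) (b : ℕ)
    (hsL : ∀ u : ℕ, (ℙ {ω | u < L ω}).toReal = Real.exp (-θ * (u : ℝ) ^ β))
    (hsX : ∀ u : ℕ, (ℙ {ω | u < X ω}).toReal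
      = Real.exp (θ * ((b : ℝ) ^ β - ((b : ℝ) + u) ^ β)))
    (n : ℕ) :
    Real.exp (-θ * (b : ℝ) ^ β) * (ℙ {ω | X ω = n + 1}).toReal
      = (ℙ {ω | L ω = b + n + 1}).toReal := by
  rw [pmf_eq X hX n, pmf_eq L hL (b + n), hsX, hsX, hsL, hsL, mul_sub,
    ← Real.exp_add, ← Real.exp_add]
  push_cast
  ring_nf

/-- For integers `a ≥ 0` and `δ ≥ 1` with `s + δ < T`, and every integer `t`
with `s + δ + 1 ≤ t ≤ T + 1`, the difference
`P(L > a)·f_{(s,a)}(t) − P(L > a + δ)·f_{(s+δ,a+δ)}(t)` equals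
`Σ_{u=1}^{δ} (g + (T − s − u) c)·P(L = a + u)`; in particular it does not depend on `t`. -/
theorem survival_weighted_difference_independent_of_t
    {Ω : Type*} [MeasureSpace Ω] [IsProbabilityMeasure (ℙ : Measure Ω)]
    (θ β g h m : ℝ) (hθ : 0 < θ) (hβ : 1 < β) (hg : 0 ≤ g) (hh : 0 ≤ h) (hm : 0 ≤ m)
    (L : Ω → ℕ) (hmeasL : Measurable L) (hposL : ∀ ω, 1 ≤ L ω)
    (hsurvL : ∀ u : ℕ, ℙ {ω | u < L ω} = ENNReal.ofReal (Real.exp (-θ * (u : ℝ) ^ β)))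
    (q : ℕ → ℝ)
    (hq : ∀ t : ℕ, 1 ≤ t →
      q t = ((1 - Real.exp (-θ * (t : ℝ) ^ β)) * g
            + Real.exp (-θ * (t : ℝ) ^ β) * (h + m * t))
          / ((∑ k ∈ Finset.Icc 1 t,
              (Real.exp (-θ * ((k : ℝ) - 1) ^ β) - Real.exp (-θ * (k : ℝ) ^ β)) * (k : ℝ))
            + Real.exp (-θ * (t : ℝ) ^ β) * (t : ℝ)))
    (c : ℝ) (hc : c = ⨅ t : ℕ, q (t + 1))
    (T s : ℕ) (hT : 1 ≤ T) (hsT : s < T)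
    (a δ : ℕ) (hδ : 1 ≤ δ) (hsδ : s + δ < T)
    -- residual life at age a
    (La : Ω → ℕ) (hmeasLa : Measurable La) (hposLa : ∀ ω, 1 ≤ La ω)
    (hsurvLa : ∀ u : ℕ, ℙ {ω | u < La ω}
      = ENNReal.ofReal (Real.exp (θ * ((a : ℝ) ^ β - ((a : ℝ) + u) ^ β))))
    -- residual life at age a + δ
    (Lad : Ω → ℕ) (hmeasLad : Measurable Lad) (hposLad : ∀ ω, 1 ≤ Lad ω)
    (hsurvLad : ∀ u : ℕ, ℙ {ω | u < Lad ω}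
      = ENNReal.ofReal (Real.exp (θ * (((a + δ : ℕ) : ℝ) ^ β
          - (((a + δ : ℕ) : ℝ) + u) ^ β))))
    -- the cost function Q_{(s,a)} and the objective f_{(s,a)}
    (Qa : ℕ → ℝ → ℝ)
    (hQa : ∀ t : ℕ, s + 1 ≤ t → t ≤ T → ∀ u : ℝ,
      Qa t u = if u ≤ (t : ℝ) then g + ((T : ℝ) - u) * c
              else h + ((t : ℝ) - (s : ℝ) + (a : ℝ)) * m + ((T : ℝ) - (t : ℝ)) * c)
    (hQa' : ∀ u : ℝ,
      Qa (T + 1) u = if u ≤ (T : ℝ) then g + ((T : ℝ) - u) * c else 0)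
    (fa : ℕ → ℝ)
    (hfa : ∀ t : ℕ, fa t = ∫ ω, Qa t ((s : ℝ) + (La ω : ℝ)) ∂ℙ)
    -- the cost function Q_{(s+δ,a+δ)} and the objective f_{(s+δ,a+δ)}
    (Qd : ℕ → ℝ → ℝ)
    (hQd : ∀ t : ℕ, s + δ + 1 ≤ t → t ≤ T → ∀ u : ℝ,
      Qd t u = if u ≤ (t : ℝ) then g + ((T : ℝ) - u) * c
              else h + ((t : ℝ) - ((s : ℝ) + (δ : ℝ)) + ((a : ℝ) + (δ : ℝ))) * m
                    + ((T : ℝ) - (t : ℝ)) * c)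
    (hQd' : ∀ u : ℝ,
      Qd (T + 1) u = if u ≤ (T : ℝ) then g + ((T : ℝ) - u) * c else 0)
    (fd : ℕ → ℝ)
    (hfd : ∀ t : ℕ, fd t = ∫ ω, Qd t (((s : ℝ) + (δ : ℝ)) + (Lad ω : ℝ)) ∂ℙ) :
    ∀ t : ℕ, s + δ + 1 ≤ t → t ≤ T + 1 →
      (ℙ {ω | a < L ω}).toReal * fa t - (ℙ {ω | a + δ < L ω}).toReal * fd t
        = ∑ u ∈ Finset.Icc 1 δ,
            (g + ((T : ℝ) - (s : ℝ) - (u : ℝ)) * c) * (ℙ {ω | L ω = a + u}).toReal := by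
  intro t ht1 ht2
  have hLs : ∀ u : ℕ, (ℙ {ω | u < L ω}).toReal = Real.exp (-θ * (u : ℝ) ^ β) :=
    fun u => by rw [hsurvL u, ENNReal.toReal_ofReal (Real.exp_nonneg _)]
  have hLas : ∀ u : ℕ, (ℙ {ω | u < La ω}).toReal
      = Real.exp (θ * ((a : ℝ) ^ β - ((a : ℝ) + u) ^ β)) :=
    fun u => by rw [hsurvLa u, ENNReal.toReal_ofReal (Real.exp_nonneg _)]
  have hLads : ∀ u : ℕ, (ℙ {ω | u < Lad ω}).toReal
      = Real.exp (θ * (((a + δ : ℕ) : ℝ) ^ β - (((a + δ : ℕ) : ℝ) + u) ^ β)) :=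
    fun u => by rw [hsurvLad u, ENNReal.toReal_ofReal (Real.exp_nonneg _)]
  have keyA' : ∀ k : ℕ, 1 ≤ k →
      Real.exp (-θ * (a : ℝ) ^ β) * (ℙ {ω | La ω = k}).toReal
        = (ℙ {ω | L ω = a + k}).toReal := by
    intro k hk
    obtain ⟨n, rfl⟩ := Nat.exists_eq_succ_of_ne_zero (by omega : k ≠ 0)
    exact key_lemma θ β L La hmeasL hmeasLa a hLs hLas n
  have keyD' : ∀ k : ℕ, 1 ≤ k →
      Real.exp (-θ * ((a + δ : ℕ) : ℝ) ^ β) * (ℙ {ω | Lad ω = k}).toReal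
        = (ℙ {ω | L ω = a + δ + k}).toReal := by
    intro k hk
    obtain ⟨n, rfl⟩ := Nat.exists_eq_succ_of_ne_zero (by omega : k ≠ 0)
    exact key_lemma θ β L Lad hmeasL hmeasLad (a + δ) hLs hLads n
  rw [hLs a, hLs (a + δ)]
  suffices H : ∀ (M : ℕ) (C : ℝ), δ + 1 ≤ M →
      fa t = (∑ k ∈ Finset.Icc 1 M,
          (g + ((T : ℝ) - (s : ℝ) - (k : ℝ)) * c) * (ℙ {ω | La ω = k}).toReal)
        + C * (ℙ {ω | M < La ω}).toReal →
      fd t = (∑ k ∈ Finset.Icc 1 (M - δ),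
          (g + ((T : ℝ) - (s : ℝ) - (δ : ℝ) - (k : ℝ)) * c) * (ℙ {ω | Lad ω = k}).toReal)
        + C * (ℙ {ω | M - δ < Lad ω}).toReal →
      Real.exp (-θ * (a : ℝ) ^ β) * fa t
        - Real.exp (-θ * ((a + δ : ℕ) : ℝ) ^ β) * fd t
        = ∑ u ∈ Finset.Icc 1 δ,
            (g + ((T : ℝ) - (s : ℝ) - (u : ℝ)) * c) * (ℙ {ω | L ω = a + u}).toReal by
    rcases Nat.lt_or_ge t (T + 1) with hlt | hge
    · have htT : t ≤ T := by omega
      refine H (t - s) (h + ((t : ℝ) - (s : ℝ) + (a : ℝ)) * m + ((T : ℝ) - (t : ℝ)) * c)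
        (by omega) ?_ ?_
      · have hint : (fun ω => Qa t ((s : ℝ) + (La ω : ℝ)))
            = fun ω => if La ω ≤ t - s
              then g + ((T : ℝ) - (s : ℝ) - ((La ω : ℕ) : ℝ)) * c
              else h + ((t : ℝ) - (s : ℝ) + (a : ℝ)) * m + ((T : ℝ) - (t : ℝ)) * c := by
          funext ω
          rw [hQa t (by omega) htT]
          have hiff : ((s : ℝ) + (La ω : ℝ) ≤ (t : ℝ)) ↔ La ω ≤ t - s := by
            rw [show (s : ℝ) + (La ω : ℝ) = ((s + La ω : ℕ) : ℝ) by push_cast; ring,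
              Nat.cast_le]
            omega
          by_cases hn : La ω ≤ t - s
          · rw [if_pos (hiff.2 hn), if_pos hn]; ring
          · rw [if_neg (fun h' => hn (hiff.1 h')), if_neg hn]
        rw [hfa t, hint]
        exact integral_step La hmeasLa hposLa (t - s)
          (fun k => g + ((T : ℝ) - (s : ℝ) - (k : ℝ)) * c) _
      · have hint : (fun ω => Qd t (((s : ℝ) + (δ : ℝ)) + (Lad ω : ℝ)))
            = fun ω => if Lad ω ≤ t - s - δ
              then g + ((T : ℝ) - (s : ℝ) - (δ : ℝ) - ((Lad ω : ℕ) : ℝ)) * c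
              else h + ((t : ℝ) - (s : ℝ) + (a : ℝ)) * m + ((T : ℝ) - (t : ℝ)) * c := by
          funext ω
          rw [hQd t ht1 htT]
          have hiff : (((s : ℝ) + (δ : ℝ)) + (Lad ω : ℝ) ≤ (t : ℝ)) ↔ Lad ω ≤ t - s - δ := by
            rw [show ((s : ℝ) + (δ : ℝ)) + (Lad ω : ℝ) = ((s + δ + Lad ω : ℕ) : ℝ) by
              push_cast; ring, Nat.cast_le]
            omega
          by_cases hn : Lad ω ≤ t - s - δ
          · rw [if_pos (hiff.2 hn), if_pos hn]; ring
          · rw [if_neg (fun h' => hn (hiff.1 h')), if_neg hn]; ring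
        rw [hfd t, hint]
        exact integral_step Lad hmeasLad hposLad (t - s - δ)
          (fun k => g + ((T : ℝ) - (s : ℝ) - (δ : ℝ) - (k : ℝ)) * c) _
    · have htT : t = T + 1 := by omega
      subst htT
      refine H (T - s) 0 (by omega) ?_ ?_
      · have hint : (fun ω => Qa (T + 1) ((s : ℝ) + (La ω : ℝ)))
            = fun ω => if La ω ≤ T - s
              then g + ((T : ℝ) - (s : ℝ) - ((La ω : ℕ) : ℝ)) * c
              else (0 : ℝ) := by
          funext ω
          rw [hQa' ((s : ℝ) + (La ω : ℝ))]
          have hiff : ((s : ℝ) + (La ω : ℝ) ≤ (T : ℝ)) ↔ La ω ≤ T - s := by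
            rw [show (s : ℝ) + (La ω : ℝ) = ((s + La ω : ℕ) : ℝ) by push_cast; ring,
              Nat.cast_le]
            omega
          by_cases hn : La ω ≤ T - s
          · rw [if_pos (hiff.2 hn), if_pos hn]; ring
          · rw [if_neg (fun h' => hn (hiff.1 h')), if_neg hn]
        rw [hfa (T + 1), hint]
        exact integral_step La hmeasLa hposLa (T - s)
          (fun k => g + ((T : ℝ) - (s : ℝ) - (k : ℝ)) * c) _
      · have hint : (fun ω => Qd (T + 1) (((s : ℝ) + (δ : ℝ)) + (Lad ω : ℝ)))
            = fun ω => if Lad ω ≤ T - s - δ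
              then g + ((T : ℝ) - (s : ℝ) - (δ : ℝ) - ((Lad ω : ℕ) : ℝ)) * c
              else (0 : ℝ) := by
          funext ω
          rw [hQd' (((s : ℝ) + (δ : ℝ)) + (Lad ω : ℝ))]
          have hiff : (((s : ℝ) + (δ : ℝ)) + (Lad ω : ℝ) ≤ (T : ℝ)) ↔ Lad ω ≤ T - s - δ := by
            rw [show ((s : ℝ) + (δ : ℝ)) + (Lad ω : ℝ) = ((s + δ + Lad ω : ℕ) : ℝ) by
              push_cast; ring, Nat.cast_le]
            omega
          by_cases hn : Lad ω ≤ T - s - δ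
          · rw [if_pos (hiff.2 hn), if_pos hn]; ring
          · rw [if_neg (fun h' => hn (hiff.1 h')), if_neg hn]
        rw [hfd (T + 1), hint]
        exact integral_step Lad hmeasLad hposLad (T - s - δ)
          (fun k => g + ((T : ℝ) - (s : ℝ) - (δ : ℝ) - (k : ℝ)) * c) _
  intro M C hMδ hfaE hfdE
  have hδM : δ ≤ M := by omega
  have tailA : Real.exp (-θ * (a : ℝ) ^ β) * (ℙ {ω | M < La ω}).toReal
      = Real.exp (-θ * ((a + M : ℕ) : ℝ) ^ β) := by
    rw [hLas M, ← Real.exp_add]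
    congr 1
    push_cast
    ring
  have tailD : Real.exp (-θ * ((a + δ : ℕ) : ℝ) ^ β) * (ℙ {ω | M - δ < Lad ω}).toReal
      = Real.exp (-θ * ((a + M : ℕ) : ℝ) ^ β) := by
    rw [hLads (M - δ), ← Real.exp_add]
    congr 1
    rw [show ((M - δ : ℕ) : ℝ) = (M : ℝ) - (δ : ℝ) from by rw [Nat.cast_sub hδM]]
    push_cast
    ring
  have EA : Real.exp (-θ * (a : ℝ) ^ β) * fa t
      = (∑ k ∈ Finset.Icc 1 M,
          (g + ((T : ℝ) - (s : ℝ) - (k : ℝ)) * c) * (ℙ {ω | L ω = a + k}).toReal)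
        + C * Real.exp (-θ * ((a + M : ℕ) : ℝ) ^ β) := by
    rw [hfaE, mul_add, Finset.mul_sum]
    congr 1
    · refine Finset.sum_congr rfl fun k hk => ?_
      rw [← keyA' k (Finset.mem_Icc.1 hk).1]; ring
    · rw [← tailA]; ring
  have ED : Real.exp (-θ * ((a + δ : ℕ) : ℝ) ^ β) * fd t
      = (∑ k ∈ Finset.Icc 1 (M - δ),
          (g + ((T : ℝ) - (s : ℝ) - (δ : ℝ) - (k : ℝ)) * c)
            * (ℙ {ω | L ω = a + δ + k}).toReal)
        + C * Real.exp (-θ * ((a + M : ℕ) : ℝ) ^ β) := by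
    rw [hfdE, mul_add, Finset.mul_sum]
    congr 1
    · refine Finset.sum_congr rfl fun k hk => ?_
      rw [← keyD' k (Finset.mem_Icc.1 hk).1]; ring
    · rw [← tailD]; ring
  rw [EA, ED]
  have reidx : ∑ k ∈ Finset.Icc 1 (M - δ),
      (g + ((T : ℝ) - (s : ℝ) - (δ : ℝ) - (k : ℝ)) * c) * (ℙ {ω | L ω = a + δ + k}).toReal
      = ∑ j ∈ Finset.Icc (δ + 1) M,
      (g + ((T : ℝ) - (s : ℝ) - (j : ℝ)) * c) * (ℙ {ω | L ω = a + j}).toReal := by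
    rw [show Finset.Icc (δ + 1) M = (Finset.Icc 1 (M - δ)).map (addRightEmbedding δ) from by
      rw [Finset.map_add_right_Icc]; congr 1 <;> omega, Finset.sum_map]
    refine Finset.sum_congr rfl fun k hk => ?_
    simp only [addRightEmbedding_apply]
    rw [show a + (k + δ) = a + δ + k from by omega]
    push_cast
    ring
  have split : ∑ k ∈ Finset.Icc 1 M,
      (g + ((T : ℝ) - (s : ℝ) - (k : ℝ)) * c) * (ℙ {ω | L ω = a + k}).toReal
      = (∑ k ∈ Finset.Icc 1 δ,
          (g + ((T : ℝ) - (s : ℝ) - (k : ℝ)) * c) * (ℙ {ω | L ω = a + k}).toReal)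
        + ∑ k ∈ Finset.Icc (δ + 1) M,
          (g + ((T : ℝ) - (s : ℝ) - (k : ℝ)) * c) * (ℙ {ω | L ω = a + k}).toReal := by
    rw [← Finset.Ico_add_one_right_eq_Icc 1 M, ← Finset.Ico_add_one_right_eq_Icc 1 δ, ← Finset.Ico_add_one_right_eq_Icc (δ + 1) M]
    exact (Finset.sum_Ico_consecutive _ (by omega) (by omega)).symm
  rw [reidx, split]
  ring
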